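/- Let u be C² near a boundary point of a domain, H its n × n symmetric Hessian with eigenvalues λ₁, …, λₙ satisfying ∑ᵢ arctan λᵢ ≥ h > (n−2)π/2, and let λ'₁, …, λ'_{n−1} be the eigenvalues of the upper-left (n−1)×(n−1) block of H. Then ∑_{α=1}^{n−1} arctan λ'_α ≥ ∑_{i=1}^n arctan λᵢ − arctan(H_{nn}). -/

import Mathlib

open Real Finset


lemma ne_odd_pi_div_two {a : ℝ} (h1 : -(π/2) < a) (h2 : a < π/2) :
    ∀ k : ℤ, a ≠ (2 * k + 1) * π / 2 := by
  intro k hk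
  have hπ := Real.pi_pos
  rcases le_or_gt 0 (k:ℝ) with hk0 | hk0
  · nlinarith [hk]
  · have hk1 : (k:ℝ) ≤ -1 := by
      have : k ≤ -1 := by exact_mod_cast Int.lt_add_one_iff.mp (by exact_mod_cast hk0)
      exact_mod_cast this
    nlinarith [hk]

lemma tan_superadd_two {a b : ℝ} (ha : 0 ≤ a) (hb : 0 ≤ b) (hab : a + b < π/2) :
    tan a + tan b ≤ tan (a + b) := by
  have hπ := Real.pi_pos
  have ha2 : a < π/2 := by linarith
  have hb2 : b < π/2 := by linarith
  have hta : 0 ≤ tan a := tan_nonneg_of_nonneg_of_le_pi_div_two ha ha2.le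
  have htb : 0 ≤ tan b := tan_nonneg_of_nonneg_of_le_pi_div_two hb hb2.le
  have hP : tan a * tan b < 1 := by
    rcases eq_or_lt_of_le ha with rfl | ha0
    · simp [Real.tan_zero]
    rcases eq_or_lt_of_le hb with rfl | hb0
    · simp [Real.tan_zero]
    have h1 : tan b < tan (π/2 - a) := by
      apply tan_lt_tan_of_nonneg_of_lt_pi_div_two hb (by linarith) (by linarith)
    rw [Real.tan_pi_div_two_sub] at h1
    have hta0 : 0 < tan a := tan_pos_of_pos_of_lt_pi_div_two ha0 ha2
    calc tan a * tan b < tan a * (tan a)⁻¹ := by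
          exact mul_lt_mul_of_pos_left h1 hta0
      _ = 1 := mul_inv_cancel₀ hta0.ne'
  have hadd : tan (a + b) = (tan a + tan b) / (1 - tan a * tan b) := by
    apply Real.tan_add'
    exact ⟨ne_odd_pi_div_two (by linarith) ha2, ne_odd_pi_div_two (by linarith) hb2⟩
  rw [hadd]
  rw [le_div_iff₀ (by linarith)]
  nlinarith [mul_nonneg (mul_nonneg hta htb) (add_nonneg hta htb)]

lemma tan_superadd {ι : Type*} (s : Finset ι) (ψ : ι → ℝ) (h0 : ∀ i ∈ s, 0 ≤ ψ i)
    (hs : ∑ i ∈ s, ψ i < π/2) : ∑ i ∈ s, tan (ψ i) ≤ tan (∑ i ∈ s, ψ i) := by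
  induction s using Finset.cons_induction with
  | empty => simp
  | cons j s hj ih =>
    rw [Finset.sum_cons, Finset.sum_cons] at *
    have h0' : ∀ i ∈ s, 0 ≤ ψ i := fun i hi => h0 i (Finset.mem_cons_of_mem hi)
    have hsum0 : 0 ≤ ∑ i ∈ s, ψ i := Finset.sum_nonneg h0'
    have hj0 : 0 ≤ ψ j := h0 j (Finset.mem_cons_self j s)
    have ihs : ∑ i ∈ s, tan (ψ i) ≤ tan (∑ i ∈ s, ψ i) := ih h0' (by linarith)
    have h2 := tan_superadd_two hj0 hsum0 hs
    linarith


lemma arctan_pos' {x : ℝ} : 0 < arctan x ↔ 0 < x := by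
  constructor
  · intro h
    have := arctan_strictMono.lt_iff_lt (a := 0) (b := x)
    rw [Real.arctan_zero] at this
    exact this.mp h
  · intro h
    have := arctan_strictMono (a := 0) (b := x) h
    rwa [Real.arctan_zero] at this

lemma cs_sum {ι : Type*} (s : Finset ι) (u c : ι → ℝ) (hu : ∀ i ∈ s, 0 < u i) :
    (∑ i ∈ s, c i)^2 ≤ (∑ i ∈ s, u i * c i^2) * (∑ i ∈ s, (u i)⁻¹) := by
  have h := Finset.sum_mul_sq_le_sq_mul_sq s (fun i => Real.sqrt (u i) * c i)
    (fun i => (Real.sqrt (u i))⁻¹)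
  have e1 : ∑ i ∈ s, (Real.sqrt (u i) * c i) * (Real.sqrt (u i))⁻¹ = ∑ i ∈ s, c i := by
    refine Finset.sum_congr rfl fun i hi => ?_
    have : Real.sqrt (u i) ≠ 0 := (Real.sqrt_pos.mpr (hu i hi)).ne'
    field_simp
  have e2 : ∑ i ∈ s, (Real.sqrt (u i) * c i)^2 = ∑ i ∈ s, u i * c i^2 := by
    refine Finset.sum_congr rfl fun i hi => ?_
    rw [mul_pow, Real.sq_sqrt (hu i hi).le]
  have e3 : ∑ i ∈ s, ((Real.sqrt (u i))⁻¹)^2 = ∑ i ∈ s, (u i)⁻¹ := by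
    refine Finset.sum_congr rfl fun i hi => ?_
    rw [inv_pow, Real.sq_sqrt (hu i hi).le]
  rwa [e1, e2, e3] at h

lemma sum_pi_div_two_sub_arctan_nonneg {ι : Type*} (s : Finset ι) (u : ι → ℝ) :
    ∀ i ∈ s, 0 ≤ π/2 - arctan (u i) := fun i _ => by
  linarith [arctan_lt_pi_div_two (u i)]

lemma core {k : ℕ} (u c : Fin k → ℝ) (ψ : ℝ) (hψ1 : -(π/2) < ψ) (hψ2 : ψ < π/2)
    (hbig : ((k:ℝ) - 1) * (π/2) < ψ + ∑ i, arctan (u i)) :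
    0 ≤ ∑ i, u i * c i ^ 2 + tan ψ * (∑ i, c i) ^ 2 := by
  have hπ := Real.pi_pos
  have hcard : ∀ i : Fin k, ((univ.erase i).card : ℝ) = (k:ℝ) - 1 := by
    intro i
    rw [Finset.card_erase_of_mem (Finset.mem_univ i), Finset.card_univ, Fintype.card_fin]
    have hk1 : (1:ℕ) ≤ k := by
      rcases Nat.eq_zero_or_pos k with rfl | h; · exact absurd i.2 (by simp)
      · exact h
    rw [Nat.cast_sub hk1]; norm_num
  have herase : ∀ i : Fin k, ∑ j ∈ univ.erase i, arctan (u j) ≤ ((k:ℝ) - 1) * (π/2) := by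
    intro i
    have := Finset.sum_le_card_nsmul (univ.erase i) (fun j => arctan (u j)) (π/2)
      (fun j _ => (arctan_lt_pi_div_two (u j)).le)
    rw [nsmul_eq_mul] at this
    rw [← hcard i]; exact this
  have hsplit : ∀ i : Fin k, ∑ j, arctan (u j) = arctan (u i) + ∑ j ∈ univ.erase i, arctan (u j) :=
    fun i => (Finset.add_sum_erase _ _ (Finset.mem_univ i)).symm
  have hsingle : ∀ i, -ψ < arctan (u i) := by
    intro i
    have h1 := herase i
    have h2 := hsplit i
    linarith [hbig, h1, h2.symm ▸ hbig]
  -- case split on sign of ψ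
  rcases le_or_gt ψ 0 with hψ0 | hψ0
  · -- ψ ≤ 0 : all u i > 0
    have hu : ∀ i, 0 < u i := by
      intro i
      have : (0:ℝ) < arctan (u i) := lt_of_le_of_lt (by linarith) (hsingle i)
      exact arctan_pos'.mp this
    set Q := ∑ i, u i * c i ^ 2 with hQdef
    set A := ∑ i, c i with hAdef
    set R := ∑ i, (u i)⁻¹ with hRdef
    have hQ : 0 ≤ Q := Finset.sum_nonneg fun i _ => mul_nonneg (hu i).le (sq_nonneg _)
    have hCS : A^2 ≤ Q * R := cs_sum univ u c (fun i _ => hu i)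
    have hneg : 0 ≤ -tan ψ := by
      rw [← Real.tan_neg]
      exact tan_nonneg_of_nonneg_of_le_pi_div_two (by linarith) (by linarith)
    have htR : (-tan ψ) * R ≤ 1 := by
      rcases eq_or_lt_of_le hψ0 with rfl | hψneg
      · simp [Real.tan_zero]
      · have hRtan : R = ∑ i, tan (π/2 - arctan (u i)) := by
          refine Finset.sum_congr rfl fun i _ => ?_
          rw [Real.tan_pi_div_two_sub, Real.tan_arctan]
        have hsum_lt : ∑ i, (π/2 - arctan (u i)) < π/2 + ψ := by
          rw [Finset.sum_sub_distrib, Finset.sum_const, Finset.card_univ, Fintype.card_fin,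
            nsmul_eq_mul]
          have : ((k:ℝ) - 1) * (π/2) - ψ < ∑ i, arctan (u i) := by linarith
          push_cast
          linarith
        have hsum_nonneg : 0 ≤ ∑ i, (π/2 - arctan (u i)) :=
          Finset.sum_nonneg (sum_pi_div_two_sub_arctan_nonneg univ u)
        have h1 : R ≤ tan (∑ i, (π/2 - arctan (u i))) := by
          rw [hRtan]
          exact tan_superadd univ _ (sum_pi_div_two_sub_arctan_nonneg univ u) (by linarith)
        have h2 : tan (∑ i, (π/2 - arctan (u i))) < tan (π/2 + ψ) :=
          tan_lt_tan_of_nonneg_of_lt_pi_div_two hsum_nonneg (by linarith) hsum_lt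
        have h3 : tan (π/2 + ψ) = (-tan ψ)⁻¹ := by
          rw [show π/2 + ψ = π/2 - (-ψ) by ring, Real.tan_pi_div_two_sub, Real.tan_neg]
        have htpos : 0 < -tan ψ := by
          rw [← Real.tan_neg]
          exact tan_pos_of_pos_of_lt_pi_div_two (by linarith) (by linarith)
        have : R < (-tan ψ)⁻¹ := by rw [← h3]; linarith
        calc (-tan ψ) * R ≤ (-tan ψ) * (-tan ψ)⁻¹ := by
              exact mul_le_mul_of_nonneg_left this.le htpos.le
          _ = 1 := mul_inv_cancel₀ htpos.ne'
    have h1 : (-tan ψ) * A^2 ≤ (-tan ψ) * (Q * R) := mul_le_mul_of_nonneg_left hCS hneg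
    have h3 : ((-tan ψ) * R) * Q ≤ 1 * Q := mul_le_mul_of_nonneg_right htR hQ
    nlinarith [h1, h3]
  · -- ψ > 0
    have hτpos : 0 < tan ψ := tan_pos_of_pos_of_lt_pi_div_two hψ0 hψ2
    by_cases hneg : ∀ i, 0 ≤ u i
    · refine add_nonneg (Finset.sum_nonneg fun i _ => mul_nonneg (hneg i) (sq_nonneg _)) ?_
      exact mul_nonneg hτpos.le (sq_nonneg _)
    · push_neg at hneg
      obtain ⟨i0, hi0⟩ := hneg
      set p := -u i0 with hpdef
      have hp : 0 < p := by simp [hpdef]; linarith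
      have harc_i0 : arctan (u i0) = -arctan p := by
        rw [hpdef, ← Real.arctan_neg]; norm_num
      -- pairwise positivity: others are > p
      have hothers : ∀ i ∈ univ.erase i0, p < u i := by
        intro i hi
        have hine : i ≠ i0 := Finset.ne_of_mem_erase hi
        -- arctan u i + arctan u i0 > π/2 - ψ
        have herase2 : ∑ j ∈ (univ.erase i0).erase i, arctan (u j) ≤ ((k:ℝ) - 2) * (π/2) := by
          have hc : (((univ.erase i0).erase i).card : ℝ) = (k:ℝ) - 2 := by
            rw [Finset.card_erase_of_mem (Finset.mem_erase.mpr ⟨hine, Finset.mem_univ i⟩),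
              Finset.card_erase_of_mem (Finset.mem_univ i0), Finset.card_univ, Fintype.card_fin]
            have hk2 : (2:ℕ) ≤ k := by
              by_contra hcon
              push_neg at hcon
              interval_cases k
              · exact absurd i0.2 (by simp)
              · exact hine (Subsingleton.elim i i0)
            have hkk : k - 1 - 1 = k - 2 := by omega
            rw [hkk, Nat.cast_sub hk2]
            push_cast
            ring
          have := Finset.sum_le_card_nsmul ((univ.erase i0).erase i) (fun j => arctan (u j)) (π/2)
            (fun j _ => (arctan_lt_pi_div_two (u j)).le)
          rw [nsmul_eq_mul] at this
          rw [← hc]; exact this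
        have hsplit2 : ∑ j, arctan (u j)
            = arctan (u i0) + (arctan (u i) + ∑ j ∈ (univ.erase i0).erase i, arctan (u j)) := by
          rw [hsplit i0]
          congr 1
          exact (Finset.add_sum_erase _ _ (Finset.mem_erase.mpr ⟨hine, Finset.mem_univ i⟩)).symm
        have hpair : π/2 - ψ < arctan (u i) + arctan (u i0) := by
          rw [hsplit2] at hbig
          push_cast at hbig herase2 ⊢
          linarith
        have : arctan p < arctan (u i) := by
          rw [harc_i0] at hpair
          linarith
        exact arctan_strictMono.lt_iff_lt.mp this
      have hτp : p < tan ψ := by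
        have h1 : arctan p < ψ := by
          have := hsingle i0
          rw [harc_i0] at this
          linarith
        have := tan_lt_tan_of_nonneg_of_lt_pi_div_two (arctan_pos'.mpr hp).le hψ2 h1
        rwa [Real.tan_arctan] at this
      set τ := tan ψ with hτdef
      set Q := ∑ i ∈ univ.erase i0, u i * c i ^ 2 with hQdef
      set A := ∑ i ∈ univ.erase i0, c i with hAdef
      set R := ∑ i ∈ univ.erase i0, (u i)⁻¹ with hRdef
      set q := c i0 with hqdef
      have hQ : 0 ≤ Q := Finset.sum_nonneg fun i hi =>
        mul_nonneg (lt_trans hp (hothers i hi)).le (sq_nonneg _)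
      have hCS : A^2 ≤ Q * R := cs_sum _ u c (fun i hi => lt_trans hp (hothers i hi))
      -- key: R + τ⁻¹ < p⁻¹
      have hkey : p * τ * R + p < τ := by
        set Ψ := ∑ i ∈ univ.erase i0, (π/2 - arctan (u i)) with hΨdef
        have hΨnonneg : 0 ≤ Ψ := Finset.sum_nonneg (sum_pi_div_two_sub_arctan_nonneg _ u)
        have hΨub : Ψ + (π/2 - ψ) < π/2 - arctan p := by
          have h1 : Ψ = ((k:ℝ)-1) * (π/2) - (∑ j, arctan (u j) - arctan (u i0)) := by
            rw [hΨdef, Finset.sum_sub_distrib, Finset.sum_const, nsmul_eq_mul, hcard i0,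
              hsplit i0]
            ring
          rw [h1, harc_i0]
          have : ((k:ℝ)-1) * (π/2) - ψ < ∑ j, arctan (u j) := by linarith
          linarith
        have harcp : 0 < arctan p := arctan_pos'.mpr hp
        have hR : R ≤ tan Ψ := by
          have hRtan : R = ∑ i ∈ univ.erase i0, tan (π/2 - arctan (u i)) := by
            refine Finset.sum_congr rfl fun i hi => ?_
            rw [Real.tan_pi_div_two_sub, Real.tan_arctan]
          rw [hRtan]
          exact tan_superadd _ _ (sum_pi_div_two_sub_arctan_nonneg _ u) (by linarith)
        have h2 : tan Ψ + tan (π/2 - ψ) ≤ tan (Ψ + (π/2 - ψ)) :=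
          tan_superadd_two hΨnonneg (by linarith) (by linarith)
        have h3 : tan (Ψ + (π/2 - ψ)) < tan (π/2 - arctan p) :=
          tan_lt_tan_of_nonneg_of_lt_pi_div_two (by linarith) (by linarith) hΨub
        have h4 : tan (π/2 - ψ) = τ⁻¹ := by rw [Real.tan_pi_div_two_sub]
        have h5 : tan (π/2 - arctan p) = p⁻¹ := by
          rw [Real.tan_pi_div_two_sub, Real.tan_arctan]
        have h6 : R + τ⁻¹ < p⁻¹ := by
          rw [← h4, ← h5]
          linarith
        have h7 : (R + τ⁻¹) * (p * τ) < p⁻¹ * (p * τ) :=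
          mul_lt_mul_of_pos_right h6 (mul_pos hp hτpos)
        have h8 : (R + τ⁻¹) * (p * τ) = p * τ * R + p * (τ⁻¹ * τ) := by ring
        rw [h8, inv_mul_cancel₀ hτpos.ne'] at h7
        rw [inv_mul_cancel_left₀ hp.ne'] at h7
        linarith
      -- split the sums
      have hsQ : ∑ i, u i * c i ^ 2 = u i0 * q ^ 2 + Q :=
        (Finset.add_sum_erase _ _ (Finset.mem_univ i0)).symm
      have hsA : ∑ i, c i = q + A := (Finset.add_sum_erase _ _ (Finset.mem_univ i0)).symm
      rw [hsQ, hsA]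
      have hui0 : u i0 = -p := by rw [hpdef]; ring
      rw [hui0]
      have hR0 : 0 ≤ R := Finset.sum_nonneg fun i hi =>
        (inv_pos.mpr (lt_trans hp (hothers i hi))).le
      have e1 : τ * p * A^2 ≤ τ * p * (Q * R) :=
        mul_le_mul_of_nonneg_left hCS (mul_nonneg hτpos.le hp.le)
      have e2 : (p * τ * R) * Q ≤ (τ - p) * Q :=
        mul_le_mul_of_nonneg_right (by linarith) hQ
      nlinarith [sq_nonneg ((τ - p) * q + τ * A), e1, e2, hτp, hp, hQ]


lemma sum_arctan_le {k : ℕ} (v : Fin k → ℝ) : ∑ i, arctan (v i) ≤ (k:ℝ) * (π/2) := by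
  have := Finset.sum_le_card_nsmul univ (fun i => arctan (v i)) (π/2)
    (fun i _ => (arctan_lt_pi_div_two (v i)).le)
  rwa [Finset.card_univ, Fintype.card_fin, nsmul_eq_mul] at this

lemma phi_convexOn (k : ℕ) (s : ℝ) (hs : ((k:ℝ) - 1) * (π/2) < s)
    (hD : Convex ℝ {x : Fin k → ℝ | s - π/2 < ∑ i, arctan (x i)}) :
    ConvexOn ℝ {x : Fin k → ℝ | s - π/2 < ∑ i, arctan (x i)}
      (fun x => tan (s - ∑ i, arctan (x i))) := by
  have hπ := Real.pi_pos
  refine ⟨hD, ?_⟩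
  intro x hx y hy a b ha hb hab
  set d : Fin k → ℝ := fun i => y i - x i with hd
  set g : Fin k → ℝ → ℝ := fun i t => x i + t * d i with hg
  set Ψ : ℝ → ℝ := fun t => ∑ i, arctan (g i t) with hΨ
  set F : ℝ → ℝ := fun t => tan (s - Ψ t) with hF
  -- membership of the segment
  have hseg : ∀ t ∈ Set.Icc (0:ℝ) 1, s - π/2 < Ψ t := by
    intro t ht
    have hz : (1 - t) • x + t • y ∈ {x : Fin k → ℝ | s - π/2 < ∑ i, arctan (x i)} :=
      hD hx hy (by linarith [ht.2]) ht.1 (by ring)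
    have : Ψ t = ∑ i, arctan (((1 - t) • x + t • y) i) := by
      refine Finset.sum_congr rfl fun i _ => ?_
      simp only [Pi.add_apply, Pi.smul_apply, smul_eq_mul, hg, hd]
      ring_nf
    rw [this]
    exact hz
  have hup : ∀ t : ℝ, s - Ψ t > -(π/2) := by
    intro t
    have h1 : Ψ t ≤ (k:ℝ) * (π/2) := sum_arctan_le _
    have : ((k:ℝ) - 1) * (π/2) + π/2 = (k:ℝ) * (π/2) := by ring
    linarith
  -- derivative structures
  have hgd : ∀ (i : Fin k) (t : ℝ), HasDerivAt (g i) (d i) t := by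
    intro i t
    exact (((hasDerivAt_id t).mul_const (d i)).const_add (x i)).congr_deriv (one_mul _)
  have harct : ∀ (i : Fin k) (t : ℝ),
      HasDerivAt (fun t => arctan (g i t)) (1 / (1 + g i t ^ 2) * d i) t := by
    intro i t
    exact (Real.hasDerivAt_arctan (g i t)).comp t (hgd i t)
  have hΨd : ∀ t : ℝ, HasDerivAt Ψ (∑ i, 1 / (1 + g i t ^ 2) * d i) t := by
    intro t
    exact HasDerivAt.fun_sum (fun i _ => harct i t)
  set P : ℝ → ℝ := fun t => -∑ i, 1 / (1 + g i t ^ 2) * d i with hP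
  have hsub : ∀ t : ℝ, HasDerivAt (fun t => s - Ψ t) (P t) t := by
    intro t
    exact (hΨd t).const_sub s
  set F' : ℝ → ℝ := fun t => (1 + tan (s - Ψ t) ^ 2) * P t with hF'def
  have hcos : ∀ t ∈ Set.Icc (0:ℝ) 1, Real.cos (s - Ψ t) ≠ 0 := by
    intro t ht
    refine (Real.cos_pos_of_mem_Ioo ⟨hup t, ?_⟩).ne'
    have := hseg t ht
    linarith
  have hFd : ∀ t ∈ Set.Icc (0:ℝ) 1, HasDerivAt F (F' t) t := by
    intro t ht
    have h1 := (Real.hasDerivAt_tan (hcos t ht)).comp t (hsub t)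
    have h2 : 1 / Real.cos (s - Ψ t) ^ 2 = 1 + tan (s - Ψ t) ^ 2 := by
      rw [← Real.inv_one_add_tan_sq (hcos t ht), one_div, inv_inv]
    rwa [h2] at h1
  -- second derivative of P
  have hPd : ∀ t : ℝ, HasDerivAt P (∑ i, 2 * g i t * d i ^ 2 / (1 + g i t ^ 2) ^ 2) t := by
    intro t
    have hterm : ∀ i : Fin k, HasDerivAt (fun t => 1 / (1 + g i t ^ 2) * d i)
        (-(2 * g i t * d i) / (1 + g i t ^ 2) ^ 2 * d i) t := by
      intro i
      have hden : HasDerivAt (fun t => 1 + g i t ^ 2) (2 * g i t * d i) t := by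
        have := ((hgd i t).pow 2).const_add 1
        simpa [mul_comm, mul_assoc] using this
      have hden_ne : (1 + g i t ^ 2) ≠ 0 := by positivity
      have := ((hasDerivAt_const t (1:ℝ)).div hden hden_ne).mul_const (d i)
      simpa using this
    have := (HasDerivAt.fun_sum (fun i (_ : i ∈ univ) => hterm i)).fun_neg
    refine this.congr_deriv ?_
    rw [← Finset.sum_neg_distrib]
    refine Finset.sum_congr rfl fun i _ => ?_
    ring
  have hF'd : ∀ t ∈ Set.Icc (0:ℝ) 1, HasDerivAt F'
      ((1 + tan (s - Ψ t) ^ 2) *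
        (2 * tan (s - Ψ t) * P t ^ 2 + ∑ i, 2 * g i t * d i ^ 2 / (1 + g i t ^ 2) ^ 2)) t := by
    intro t ht
    have htan : HasDerivAt (fun t => tan (s - Ψ t)) ((1 + tan (s - Ψ t) ^ 2) * P t) t := hFd t ht
    have hT : HasDerivAt (fun t => 1 + tan (s - Ψ t) ^ 2)
        (2 * tan (s - Ψ t) * ((1 + tan (s - Ψ t) ^ 2) * P t)) t := by
      have := (htan.pow 2).const_add 1
      simpa [mul_comm, mul_assoc] using this
    have := hT.fun_mul (hPd t)
    refine this.congr_deriv ?_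
    ring
  -- nonnegativity of second derivative
  have hF''0 : ∀ t ∈ Set.Icc (0:ℝ) 1,
      0 ≤ (1 + tan (s - Ψ t) ^ 2) *
        (2 * tan (s - Ψ t) * P t ^ 2 + ∑ i, 2 * g i t * d i ^ 2 / (1 + g i t ^ 2) ^ 2) := by
    intro t ht
    have h1 : (0:ℝ) < 1 + tan (s - Ψ t) ^ 2 := by positivity
    refine mul_nonneg h1.le ?_
    have hΨt : ∑ i, arctan (g i t) = Ψ t := rfl
    have hcore := core (fun i => g i t) (fun i => d i / (1 + g i t ^ 2)) (s - Ψ t)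
      (hup t) (by linarith [hseg t ht]) (by rw [hΨt]; linarith [hs])
    have e1 : ∑ i, 2 * g i t * d i ^ 2 / (1 + g i t ^ 2) ^ 2
        = 2 * ∑ i, g i t * (d i / (1 + g i t ^ 2)) ^ 2 := by
      rw [Finset.mul_sum]
      refine Finset.sum_congr rfl fun i _ => ?_
      have : (1 + g i t ^ 2) ≠ 0 := by positivity
      field_simp
    have e2 : P t ^ 2 = (∑ i, d i / (1 + g i t ^ 2)) ^ 2 := by
      rw [hP]
      rw [neg_sq]
      congr 1
      exact Finset.sum_congr rfl fun i _ => by ring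
    rw [e1, e2]
    nlinarith [hcore]
  -- convexity of F on Icc 0 1
  set F'' : ℝ → ℝ := fun t => (1 + tan (s - Ψ t) ^ 2) *
      (2 * tan (s - Ψ t) * P t ^ 2 + ∑ i, 2 * g i t * d i ^ 2 / (1 + g i t ^ 2) ^ 2) with hF''def
  have hcvx : ConvexOn ℝ (Set.Icc (0:ℝ) 1) F := by
    apply convexOn_of_hasDerivWithinAt2_nonneg (convex_Icc 0 1) (f' := F') (f'' := F'')
    · intro t ht
      exact ((hFd t ht).continuousAt).continuousWithinAt
    · intro t ht
      rw [interior_Icc] at ht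
      exact (hFd t (Set.mem_Icc_of_Ioo ht)).hasDerivWithinAt
    · intro t ht
      rw [interior_Icc] at ht
      exact (hF'd t (Set.mem_Icc_of_Ioo ht)).hasDerivWithinAt
    · intro t ht
      rw [interior_Icc] at ht
      exact hF''0 t (Set.mem_Icc_of_Ioo ht)
  -- conclude
  have h01 : F (a * 0 + b * 1) ≤ a * F 0 + b * F 1 :=
    hcvx.2 (Set.left_mem_Icc.mpr zero_le_one) (Set.right_mem_Icc.mpr zero_le_one) ha hb hab
  have hg0 : ∀ i, g i 0 = x i := fun i => by simp [hg]
  have hg1 : ∀ i, g i 1 = y i := fun i => by simp [hg, hd]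
  have hgb : ∀ i, g i b = (a • x + b • y) i := by
    intro i
    have : a = 1 - b := by linarith
    simp only [Pi.add_apply, Pi.smul_apply, smul_eq_mul, hg, hd, this]
    ring
  have hΨ0 : Ψ 0 = ∑ i, arctan (x i) := Finset.sum_congr rfl fun i _ => by rw [hg0]
  have hΨ1 : Ψ 1 = ∑ i, arctan (y i) := Finset.sum_congr rfl fun i _ => by rw [hg1]
  have hΨb : Ψ b = ∑ i, arctan ((a • x + b • y) i) := Finset.sum_congr rfl fun i _ => by rw [hgb]
  have hF0 : F 0 = tan (s - ∑ i, arctan (x i)) := by show tan (s - Ψ 0) = _; rw [hΨ0]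
  have hF1 : F 1 = tan (s - ∑ i, arctan (y i)) := by show tan (s - Ψ 1) = _; rw [hΨ1]
  have hFb : F b = tan (s - ∑ i, arctan ((a • x + b • y) i)) := by
    show tan (s - Ψ b) = _; rw [hΨb]
  simp only [mul_zero, mul_one, zero_add] at h01
  rw [hF0, hF1, hFb] at h01
  simpa using h01


lemma mem_split_lt (k : ℕ) (s : ℝ) (hs : ((k:ℝ) - 1) * (π/2) < s) (x : Fin (k+1) → ℝ) :
    s < ∑ i, arctan (x i) ↔
      (s - π/2 < ∑ α, arctan (x (Fin.castSucc α)) ∧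
        tan (s - ∑ α, arctan (x (Fin.castSucc α))) < x (Fin.last k)) := by
  have hπ := Real.pi_pos
  rw [Fin.sum_univ_castSucc]
  have hub : ∑ α, arctan (x (Fin.castSucc α)) ≤ (k:ℝ) * (π/2) := sum_arctan_le _
  have hlast1 := arctan_lt_pi_div_two (x (Fin.last k))
  have hlast2 := neg_pi_div_two_lt_arctan (x (Fin.last k))
  constructor
  · intro h
    have h1 : s - π/2 < ∑ α, arctan (x (Fin.castSucc α)) := by linarith
    refine ⟨h1, ?_⟩
    have h2 : -(π/2) < s - ∑ α, arctan (x (Fin.castSucc α)) := by nlinarith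
    have h3 : s - ∑ α, arctan (x (Fin.castSucc α)) < arctan (x (Fin.last k)) := by linarith
    have := tan_lt_tan_of_lt_of_lt_pi_div_two h2 hlast1 h3
    rwa [Real.tan_arctan] at this
  · rintro ⟨h1, h2⟩
    have h2' : -(π/2) < s - ∑ α, arctan (x (Fin.castSucc α)) := by nlinarith
    have h3 : s - ∑ α, arctan (x (Fin.castSucc α))
        = arctan (tan (s - ∑ α, arctan (x (Fin.castSucc α)))) :=
      (arctan_tan h2' (by linarith)).symm
    have h4 : arctan (tan (s - ∑ α, arctan (x (Fin.castSucc α)))) < arctan (x (Fin.last k)) :=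
      arctan_strictMono h2
    rw [← h3] at h4
    linarith

lemma mem_split_le (k : ℕ) (s : ℝ) (hs : ((k:ℝ) - 1) * (π/2) < s) (x : Fin (k+1) → ℝ) :
    s ≤ ∑ i, arctan (x i) ↔
      (s - π/2 < ∑ α, arctan (x (Fin.castSucc α)) ∧
        tan (s - ∑ α, arctan (x (Fin.castSucc α))) ≤ x (Fin.last k)) := by
  have hπ := Real.pi_pos
  rw [Fin.sum_univ_castSucc]
  have hub : ∑ α, arctan (x (Fin.castSucc α)) ≤ (k:ℝ) * (π/2) := sum_arctan_le _
  have hlast1 := arctan_lt_pi_div_two (x (Fin.last k))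
  have hlast2 := neg_pi_div_two_lt_arctan (x (Fin.last k))
  constructor
  · intro h
    have h1 : s - π/2 < ∑ α, arctan (x (Fin.castSucc α)) := by linarith
    refine ⟨h1, ?_⟩
    have h2 : -(π/2) < s - ∑ α, arctan (x (Fin.castSucc α)) := by nlinarith
    by_contra hcon
    push_neg at hcon
    have h4 : arctan (x (Fin.last k)) < arctan (tan (s - ∑ α, arctan (x (Fin.castSucc α)))) :=
      arctan_strictMono hcon
    rw [arctan_tan h2 (by linarith)] at h4
    linarith
  · rintro ⟨h1, h2⟩
    have h2' : -(π/2) < s - ∑ α, arctan (x (Fin.castSucc α)) := by nlinarith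
    by_contra hcon
    push_neg at hcon
    have h3 : arctan (x (Fin.last k)) < s - ∑ α, arctan (x (Fin.castSucc α)) := by linarith
    have h4 := tan_lt_tan_of_lt_of_lt_pi_div_two hlast2 (by linarith) h3
    rw [Real.tan_arctan] at h4
    linarith

lemma open_convex : ∀ (n : ℕ) (s : ℝ), ((n:ℝ) - 2) * (π/2) < s →
    Convex ℝ {x : Fin n → ℝ | s < ∑ i, arctan (x i)} := by
  intro n
  induction n with
  | zero =>
    intro s hs
    rcases lt_or_ge s 0 with h | h
    · have : {x : Fin 0 → ℝ | s < ∑ i, arctan (x i)} = Set.univ := by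
        ext x; simp [h]
      rw [this]; exact convex_univ
    · have : {x : Fin 0 → ℝ | s < ∑ i, arctan (x i)} = ∅ := by
        ext x; simp; linarith
      rw [this]; exact convex_empty
  | succ k ih =>
    intro s hs
    have hπ := Real.pi_pos
    have hs1 : ((k:ℝ) - 1) * (π/2) < s := by push_cast at hs; linarith
    have hs' : ((k:ℝ) - 2) * (π/2) < s - π/2 := by linarith
    have hD := ih (s - π/2) hs'
    have hφ := phi_convexOn k s hs1 hD
    intro x hx y hy a b ha hb hab
    rw [Set.mem_setOf_eq, mem_split_lt k s hs1] at hx hy ⊢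
    obtain ⟨hx1, hx2⟩ := hx
    obtain ⟨hy1, hy2⟩ := hy
    have hcast : ∀ α : Fin k, (a • x + b • y) (Fin.castSucc α)
        = (a • (x ∘ Fin.castSucc) + b • (y ∘ Fin.castSucc)) α := by
      intro α; simp
    have hmemz : a • (x ∘ Fin.castSucc) + b • (y ∘ Fin.castSucc)
        ∈ {x : Fin k → ℝ | s - π/2 < ∑ i, arctan (x i)} := hD hx1 hy1 ha hb hab
    have hsum_eq : ∑ α, arctan ((a • x + b • y) (Fin.castSucc α))
        = ∑ α, arctan ((a • (x ∘ Fin.castSucc) + b • (y ∘ Fin.castSucc)) α) :=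
      Finset.sum_congr rfl fun α _ => by rw [hcast]
    constructor
    · rw [hsum_eq]; exact hmemz
    · rw [hsum_eq]
      have hcv := hφ.2 hx1 hy1 ha hb hab
      have hzlast : (a • x + b • y) (Fin.last k) = a * x (Fin.last k) + b * y (Fin.last k) := by
        simp
    -- combine
      have hfin : a * tan (s - ∑ α, arctan (x (Fin.castSucc α)))
            + b * tan (s - ∑ α, arctan (y (Fin.castSucc α)))
          < a * x (Fin.last k) + b * y (Fin.last k) := by
        rcases lt_or_ge 0 a with ha0 | ha0
        · have e1 : a * tan (s - ∑ α, arctan (x (Fin.castSucc α))) < a * x (Fin.last k) :=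
            mul_lt_mul_of_pos_left hx2 ha0
          have e2 : b * tan (s - ∑ α, arctan (y (Fin.castSucc α))) ≤ b * y (Fin.last k) :=
            mul_le_mul_of_nonneg_left hy2.le hb
          linarith
        · have ha' : a = 0 := le_antisymm ha0 ha
          have hb' : b = 1 := by linarith
          rw [ha', hb']; simpa using hy2
      calc tan (s - ∑ α, arctan ((a • (x ∘ Fin.castSucc) + b • (y ∘ Fin.castSucc)) α))
          ≤ a * tan (s - ∑ α, arctan (x (Fin.castSucc α)))
            + b * tan (s - ∑ α, arctan (y (Fin.castSucc α))) := by
            simpa [Function.comp] using hcv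
        _ < a * x (Fin.last k) + b * y (Fin.last k) := hfin
        _ = (a • x + b • y) (Fin.last k) := by simp

lemma closed_convex (k : ℕ) (s : ℝ) (hs : ((k:ℝ) + 1 - 2) * (π/2) < s) :
    Convex ℝ {x : Fin (k+1) → ℝ | s ≤ ∑ i, arctan (x i)} := by
  have hπ := Real.pi_pos
  have hs1 : ((k:ℝ) - 1) * (π/2) < s := by push_cast at hs; linarith
  have hs' : ((k:ℝ) - 2) * (π/2) < s - π/2 := by linarith
  have hD := open_convex k (s - π/2) hs'
  have hφ := phi_convexOn k s hs1 hD
  intro x hx y hy a b ha hb hab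
  rw [Set.mem_setOf_eq, mem_split_le k s hs1] at hx hy ⊢
  obtain ⟨hx1, hx2⟩ := hx
  obtain ⟨hy1, hy2⟩ := hy
  have hcast : ∀ α : Fin k, (a • x + b • y) (Fin.castSucc α)
      = (a • (x ∘ Fin.castSucc) + b • (y ∘ Fin.castSucc)) α := by
    intro α; simp
  have hmemz : a • (x ∘ Fin.castSucc) + b • (y ∘ Fin.castSucc)
      ∈ {x : Fin k → ℝ | s - π/2 < ∑ i, arctan (x i)} := hD hx1 hy1 ha hb hab
  have hsum_eq : ∑ α, arctan ((a • x + b • y) (Fin.castSucc α))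
      = ∑ α, arctan ((a • (x ∘ Fin.castSucc) + b • (y ∘ Fin.castSucc)) α) :=
    Finset.sum_congr rfl fun α _ => by rw [hcast]
  constructor
  · rw [hsum_eq]; exact hmemz
  · rw [hsum_eq]
    have hcv := hφ.2 hx1 hy1 ha hb hab
    calc tan (s - ∑ α, arctan ((a • (x ∘ Fin.castSucc) + b • (y ∘ Fin.castSucc)) α))
        ≤ a * tan (s - ∑ α, arctan (x (Fin.castSucc α)))
          + b * tan (s - ∑ α, arctan (y (Fin.castSucc α))) := by
          simpa [Function.comp] using hcv
      _ ≤ a * x (Fin.last k) + b * y (Fin.last k) := by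
          have e1 := mul_le_mul_of_nonneg_left hx2 ha
          have e2 := mul_le_mul_of_nonneg_left hy2 hb
          linarith
      _ = (a • x + b • y) (Fin.last k) := by simp


theorem stmt14 (m : ℕ) (H : Matrix (Fin (m + 1)) (Fin (m + 1)) ℝ)
    (hH : H.IsHermitian)
    (hsub : (H.submatrix Fin.castSucc Fin.castSucc).IsHermitian)
    (h : ℝ) (h1 : ((m : ℝ) + 1 - 2) * (π / 2) < h) (h2 : h < ((m : ℝ) + 1) * (π / 2))
    (hsum : h ≤ ∑ i, Real.arctan (hH.eigenvalues i)) :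
    (∑ i, Real.arctan (hH.eigenvalues i)) - Real.arctan (H (Fin.last m) (Fin.last m))
      ≤ ∑ α, Real.arctan (hsub.eigenvalues α) := by
  classical
  set lam : Fin (m+1) → ℝ := hH.eigenvalues with hlam
  set lam' : Fin m → ℝ := hsub.eigenvalues with hlam'
  set U : Matrix (Fin (m+1)) (Fin (m+1)) ℝ := (hH.eigenvectorUnitary : Matrix (Fin (m+1)) (Fin (m+1)) ℝ) with hUdef
  set V : Matrix (Fin m) (Fin m) ℝ := (hsub.eigenvectorUnitary : Matrix (Fin m) (Fin m) ℝ) with hVdef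
  have hU1 : U * star U = 1 := Matrix.mem_unitaryGroup_iff.mp (hH.eigenvectorUnitary).2
  have hV2 : star V * V = 1 := Matrix.mem_unitaryGroup_iff'.mp (hsub.eigenvectorUnitary).2
  have hofReal : (RCLike.ofReal ∘ lam : Fin (m+1) → ℝ) = lam := by
    funext i; simp [RCLike.ofReal_real_eq_id]
  have hofReal' : (RCLike.ofReal ∘ lam' : Fin m → ℝ) = lam' := by
    funext i; simp [RCLike.ofReal_real_eq_id]
  have hspec : H = U * Matrix.diagonal lam * star U := by
    have := hH.spectral_theorem
    rwa [hofReal] at this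
  have hsubdiag : star V * (H.submatrix Fin.castSucc Fin.castSucc) * V
      = Matrix.diagonal lam' := by
    have := hsub.conjStarAlgAut_star_eigenvectorUnitary
    simp only [Unitary.conjStarAlgAut_apply, star_star, Unitary.coe_star] at this
    rwa [hofReal'] at this
  -- the padded orthogonal matrix
  set Wm : Matrix (Fin (m+1)) (Fin (m+1)) ℝ := fun i r =>
    Fin.lastCases (Fin.lastCases 1 (fun _ => 0) r)
      (fun α => Fin.lastCases 0 (fun β => V β α) r) i with hWmdef
  have hWm_last_last : Wm (Fin.last m) (Fin.last m) = 1 := by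
    simp [hWmdef]
  have hWm_last_cast : ∀ β, Wm (Fin.last m) (Fin.castSucc β) = 0 := by
    intro β; simp [hWmdef]
  have hWm_cast_last : ∀ α, Wm (Fin.castSucc α) (Fin.last m) = 0 := by
    intro α; simp [hWmdef]
  have hWm_cast_cast : ∀ α β, Wm (Fin.castSucc α) (Fin.castSucc β) = V β α := by
    intro α β; simp [hWmdef]
  -- Wm has orthonormal rows
  have hWW : Wm * star Wm = 1 := by
    ext i i'
    rw [Matrix.mul_apply]
    simp only [Matrix.star_apply, star_trivial]
    induction i using Fin.lastCases with
    | last =>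
      induction i' using Fin.lastCases with
      | last =>
        rw [Fin.sum_univ_castSucc]
        simp [hWm_last_last, hWm_last_cast]
      | cast α =>
        rw [Fin.sum_univ_castSucc]
        simp [hWm_last_last, hWm_last_cast, hWm_cast_last, Matrix.one_apply,
          (Fin.castSucc_lt_last α).ne']
    | cast α =>
      induction i' using Fin.lastCases with
      | last =>
        rw [Fin.sum_univ_castSucc]
        simp [hWm_last_last, hWm_cast_last, hWm_last_cast, Matrix.one_apply,
          (Fin.castSucc_lt_last α).ne]
      | cast α' =>
        rw [Fin.sum_univ_castSucc]
        have hVV := congrArg (fun M => M α α') hV2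
        simp only [Matrix.mul_apply, Matrix.star_apply, star_trivial] at hVV
        simp only [hWm_cast_cast, hWm_cast_last, mul_zero, add_zero]
        rw [hVV]
        simp [Matrix.one_apply, Fin.castSucc_inj]
    all_goals rfl
  -- diagonal entries of B = Wm H Wmᵀ
  set B : Matrix (Fin (m+1)) (Fin (m+1)) ℝ := Wm * H * star Wm with hBdef
  have hB_last : B (Fin.last m) (Fin.last m) = H (Fin.last m) (Fin.last m) := by
    rw [hBdef, Matrix.mul_apply]
    have hWH : ∀ t, (Wm * H) (Fin.last m) t = H (Fin.last m) t := by
      intro t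
      rw [Matrix.mul_apply, Fin.sum_univ_castSucc]
      simp [hWm_last_cast, hWm_last_last]
    rw [Fin.sum_univ_castSucc]
    simp only [Matrix.star_apply, star_trivial, hWH, hWm_last_cast, hWm_last_last,
      mul_zero, mul_one]
    simp
  have hB_cast : ∀ α, B (Fin.castSucc α) (Fin.castSucc α) = lam' α := by
    intro α
    have hWH : ∀ t, (Wm * H) (Fin.castSucc α) t = ∑ β, V β α * H (Fin.castSucc β) t := by
      intro t
      rw [Matrix.mul_apply, Fin.sum_univ_castSucc]
      simp [hWm_cast_cast, hWm_cast_last]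
    have hfin : B (Fin.castSucc α) (Fin.castSucc α)
        = ∑ γ, (∑ β, V β α * H (Fin.castSucc β) (Fin.castSucc γ)) * V γ α := by
      rw [hBdef, Matrix.mul_apply, Fin.sum_univ_castSucc]
      simp only [Matrix.star_apply, star_trivial, hWH, hWm_cast_cast, hWm_cast_last,
        mul_zero, add_zero]
    rw [hfin]
    have hgoal := congrArg (fun M => M α α) hsubdiag
    simp only [Matrix.mul_apply, Matrix.star_apply, star_trivial, Matrix.diagonal_apply_eq,
      Matrix.submatrix_apply] at hgoal
    rw [← hgoal]
  -- C = Wm * U is orthogonal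
  set C : Matrix (Fin (m+1)) (Fin (m+1)) ℝ := Wm * U with hCdef
  have hC1 : C * star C = 1 := by
    rw [hCdef, Matrix.star_mul, ← Matrix.mul_assoc, Matrix.mul_assoc Wm U (star U), hU1,
      Matrix.mul_one, hWW]
  have hC2 : star C * C = 1 := mul_eq_one_comm.mp hC1
  have hBC : B = C * Matrix.diagonal lam * star C := by
    rw [hBdef, hspec, hCdef, Matrix.star_mul]
    noncomm_ring
  -- the doubly stochastic matrix
  set S : Matrix (Fin (m+1)) (Fin (m+1)) ℝ := fun i j => C i j ^ 2 with hSdef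
  have hS : S ∈ doublyStochastic ℝ (Fin (m+1)) := by
    rw [mem_doublyStochastic_iff_sum]
    refine ⟨fun i j => sq_nonneg _, ?_, ?_⟩
    · intro i
      have := congrArg (fun M => M i i) hC1
      simp only [Matrix.mul_apply, Matrix.star_apply, star_trivial, Matrix.one_apply_eq] at this
      rw [← this]
      exact Finset.sum_congr rfl fun j _ => (sq (C i j)).symm ▸ (pow_two (C i j))
    · intro j
      have := congrArg (fun M => M j j) hC2
      simp only [Matrix.mul_apply, Matrix.star_apply, star_trivial, Matrix.one_apply_eq] at this
      rw [← this]
      exact Finset.sum_congr rfl fun i _ => (pow_two (C i j))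
  -- diagonal of B as S.mulVec lam
  have hBS : ∀ i, B i i = S.mulVec lam i := by
    intro i
    rw [hBC]
    rw [Matrix.mul_apply]
    simp only [Matrix.mul_diagonal, Matrix.star_apply, star_trivial, Matrix.mulVec,
      dotProduct, hSdef]
    refine Finset.sum_congr rfl fun j _ => ?_
    ring
  -- Birkhoff
  set s : ℝ := ∑ i, arctan (lam i) with hsdef
  have hKconv : Convex ℝ {x : Fin (m+1) → ℝ | s ≤ ∑ i, arctan (x i)} :=
    closed_convex m s (lt_of_lt_of_le h1 hsum)
  let L : Matrix (Fin (m+1)) (Fin (m+1)) ℝ →ₗ[ℝ] (Fin (m+1) → ℝ) :=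
    { toFun := fun M => M.mulVec lam
      map_add' := fun M N => by ext i; simp [Matrix.add_mulVec]
      map_smul' := fun c M => by ext i; simp [Matrix.smul_mulVec] }
  have hSmem : S ∈ convexHull ℝ {M : Matrix (Fin (m+1)) (Fin (m+1)) ℝ |
      ∃ σ : Equiv.Perm (Fin (m+1)), σ.permMatrix ℝ = M} := by
    rw [← doublyStochastic_eq_convexHull_permMatrix]
    exact hS
  have himg : L S ∈ L '' (convexHull ℝ {M : Matrix (Fin (m+1)) (Fin (m+1)) ℝ |
      ∃ σ : Equiv.Perm (Fin (m+1)), σ.permMatrix ℝ = M}) := ⟨S, hSmem, rfl⟩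
  rw [L.image_convexHull] at himg
  have hsubset : L '' {M : Matrix (Fin (m+1)) (Fin (m+1)) ℝ |
      ∃ σ : Equiv.Perm (Fin (m+1)), σ.permMatrix ℝ = M}
      ⊆ {x : Fin (m+1) → ℝ | s ≤ ∑ i, arctan (x i)} := by
    rintro _ ⟨M, ⟨σ, rfl⟩, rfl⟩
    show s ≤ ∑ i, arctan ((σ.permMatrix ℝ).mulVec lam i)
    have hperm : ∀ i, (σ.permMatrix ℝ).mulVec lam i = lam (σ i) := by
      intro i
      rw [Matrix.mulVec, dotProduct]
      rw [Finset.sum_eq_single (σ i)]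
      · simp [Equiv.Perm.permMatrix, PEquiv.toMatrix_apply, Equiv.toPEquiv_apply]
      · intro j _ hj
        simp [Equiv.Perm.permMatrix, PEquiv.toMatrix_apply, Equiv.toPEquiv_apply, Ne.symm hj]
      · intro hj; exact absurd (Finset.mem_univ _) hj
    have : ∑ i, arctan ((σ.permMatrix ℝ).mulVec lam i) = ∑ i, arctan (lam (σ i)) :=
      Finset.sum_congr rfl fun i _ => by rw [hperm]
    rw [this, Equiv.sum_comp σ (fun j => arctan (lam j))]
  have hmemK := convexHull_min hsubset hKconv himg
  have hkey : s ≤ ∑ i, arctan (B i i) := by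
    have heq : ∑ i, arctan (B i i) = ∑ i, arctan (L S i) :=
      Finset.sum_congr rfl fun i _ => by rw [hBS i]; rfl
    rw [heq]
    exact hmemK
  rw [Fin.sum_univ_castSucc] at hkey
  have hkey2 : s ≤ (∑ α, arctan (lam' α)) + arctan (H (Fin.last m) (Fin.last m)) := by
    have e1 : ∑ α, arctan (B (Fin.castSucc α) (Fin.castSucc α)) = ∑ α, arctan (lam' α) :=
      Finset.sum_congr rfl fun α _ => by rw [hB_cast]
    rw [e1, hB_last] at hkey
    exact hkey
  linarith
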